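/- Let F be a temporal path with vertices v₀,…,v_{n−1}, let 𝓕 be the weighted successor forest where a node (ℓ,i) exists for each i and ℓ ∈ λ(e_i), parent given by σ_i (as in context), with edges of the form ((·,i),(·,i)) having weight 0 and edges ((·,i),(·,i+1)) having weight 1. Then for i < j, with ℓ = succ(t, λ(e_i)): EA(v_i, v_j, t) = +∞ if ℓ = +∞ or the (j−i−1)-th weighted level ancestor of (ℓ, i) does not exist; otherwise that ancestor is a node of the form (ℓ*, j−1) and EA(v_i, v_j, t) = ℓ*. -/
import Mathlib


/-- Embedding of `ℤ` into `EReal`. -/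
def iE (n : ℤ) : EReal := ((n : ℝ) : EReal)

/-- `succ t X` : the minimum element of `X ⊆ ℤ` that is `≥ t`, or `+∞` if none. -/
noncomputable def eSucc (t : EReal) (X : Set ℤ) : EReal :=
  sInf {y : EReal | ∃ x ∈ X, y = iE x ∧ t ≤ iE x}

/-- The parent map `σ` of the successor forest `𝓕` of a temporal path with `m` edges
`e_0, …, e_{m−1}` labelled by `lam`. `PParent lam m (ℓ, i) (q, j)` holds iff the
node `(q, j)` is `σ_i(ℓ)`: with `ℓ⁺ = succ(ℓ+1, λ(e_i))` and (for `i < m−1`)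
`ℓ' = succ(ℓ, λ(e_{i+1}))`, the parent is `(ℓ⁺, i)` if `ℓ⁺ ≤ ℓ'` (or `i = m−1` and
`ℓ⁺ < +∞`), and `(ℓ', i+1)` if `ℓ' < ℓ⁺`; undefined if both are `+∞`. -/
def PParent (lam : ℕ → Set ℤ) (m : ℕ) (x y : ℤ × ℕ) : Prop :=
  x.1 ∈ lam x.2 ∧ x.2 < m ∧
    ((y.2 = x.2 ∧ y.1 ∈ lam x.2 ∧ iE y.1 = eSucc (iE (x.1 + 1)) (lam x.2) ∧
        (x.2 + 1 = m ∨ iE y.1 ≤ eSucc (iE x.1) (lam (x.2 + 1)))) ∨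
      (y.2 = x.2 + 1 ∧ x.2 + 1 < m ∧ y.1 ∈ lam (x.2 + 1) ∧
        iE y.1 = eSucc (iE x.1) (lam (x.2 + 1)) ∧
        iE y.1 < eSucc (iE (x.1 + 1)) (lam x.2)))

/-- A journey on the temporal path graph: labels `f k ∈ lam k` for `i ≤ k < j`,
non-decreasing, with departure `f i` and arrival `f (j−1)`. -/
def PJourney (lam : ℕ → Set ℤ) (i j : ℕ) (dep arr : ℤ) : Prop :=
  ∃ f : ℕ → ℤ, (∀ k, i ≤ k → k < j → f k ∈ lam k) ∧
    (∀ k, i ≤ k → k + 1 < j → f k ≤ f (k + 1)) ∧ dep = f i ∧ arr = f (j - 1)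

/-- Earliest arrival time from `v_i` to `v_j` departing no earlier than `t`. -/
noncomputable def pEA (lam : ℕ → Set ℤ) (i j : ℕ) (t : EReal) : EReal :=
  sInf {a : EReal | ∃ dep arr : ℤ, PJourney lam i j dep arr ∧ t ≤ iE dep ∧ a = iE arr}

/-- Ancestor relation in the successor forest `𝓕`. -/
def PAnc (lam : ℕ → Set ℤ) (m : ℕ) : ℤ × ℕ → ℤ × ℕ → Prop :=
  Relation.ReflTransGen (PParent lam m)

/-- `PIsLA lam m x w a` : `a` is the `w`-th weighted level ancestor of `x` in `𝓕`,
i.e. the deepest ancestor of `x` at weighted distance at least `w` from `x`.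
Intra-edge (red) edges of `𝓕` have weight `0` and inter-edge (blue) edges weight `1`,
so the weighted distance from `x` to an ancestor `b` is `b.2 − x.2`. -/
def PIsLA (lam : ℕ → Set ℤ) (m : ℕ) (x : ℤ × ℕ) (w : ℕ) (a : ℤ × ℕ) : Prop :=
  PAnc lam m x a ∧ x.2 + w ≤ a.2 ∧
    ∀ b : ℤ × ℕ, PAnc lam m x b → x.2 + w ≤ b.2 → PAnc lam m a b

/-! ### Auxiliary lemmas -/

lemma iE_le_iE {a b : ℤ} : iE a ≤ iE b ↔ a ≤ b := by
  unfold iE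
  rw [EReal.coe_le_coe_iff]
  exact_mod_cast Iff.rfl

lemma iE_lt_top (a : ℤ) : iE a < ⊤ := EReal.coe_lt_top _

lemma iE_inj {a b : ℤ} (h : iE a = iE b) : a = b :=
  le_antisymm (iE_le_iE.mp h.le) (iE_le_iE.mp h.ge)

lemma le_eSucc (t : EReal) (X : Set ℤ) : t ≤ eSucc t X :=
  le_sInf fun y hy => by obtain ⟨x, _, rfl, ht⟩ := hy; exact ht

lemma eSucc_le {t : EReal} {X : Set ℤ} {x : ℤ} (hx : x ∈ X) (ht : t ≤ iE x) :
    eSucc t X ≤ iE x := sInf_le ⟨x, hx, rfl, ht⟩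

lemma eSucc_attained {q : ℤ} {X : Set ℤ} (h : eSucc (iE q) X ≠ ⊤) :
    ∃ y ∈ X, q ≤ y ∧ iE y = eSucc (iE q) X := by
  have hne : {y : EReal | ∃ x ∈ X, y = iE x ∧ iE q ≤ iE x}.Nonempty := by
    by_contra hempty
    rw [Set.not_nonempty_iff_eq_empty] at hempty
    exact h (by rw [eSucc, hempty, sInf_empty])
  obtain ⟨_, x0, hx0, rfl, hqx0⟩ := hne
  obtain ⟨lb, ⟨hlbX, hlbq⟩, hlbmin⟩ := Int.exists_least_of_bdd
    (P := fun z => z ∈ X ∧ q ≤ z) ⟨q, fun z hz => hz.2⟩ ⟨x0, hx0, iE_le_iE.mp hqx0⟩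
  refine ⟨lb, hlbX, hlbq, le_antisymm ?_ (sInf_le ⟨lb, hlbX, rfl, iE_le_iE.mpr hlbq⟩)⟩
  refine le_sInf fun y hy => ?_
  obtain ⟨x, hxX, rfl, hqx⟩ := hy
  exact iE_le_iE.mpr (hlbmin x ⟨hxX, iE_le_iE.mp hqx⟩)

lemma pparent_facts {lam : ℕ → Set ℤ} {m : ℕ} {x y : ℤ × ℕ} (h : PParent lam m x y) :
    x.1 ≤ y.1 ∧ (y.2 = x.2 ∨ y.2 = x.2 + 1) ∧ y.1 ∈ lam y.2 := by
  obtain ⟨hx, hxm, hcase⟩ := h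
  rcases hcase with ⟨h1, h2, h3, h4⟩ | ⟨h1, h2, h3, h4, h5⟩
  · have hle : iE (x.1 + 1) ≤ iE y.1 := h3.symm ▸ le_eSucc _ _
    have := iE_le_iE.mp hle
    exact ⟨by omega, Or.inl h1, by rw [h1]; exact h2⟩
  · have hle : iE x.1 ≤ iE y.1 := h4.symm ▸ le_eSucc _ _
    exact ⟨iE_le_iE.mp hle, Or.inr h1, by rw [h1]; exact h3⟩

lemma panc_le {lam : ℕ → Set ℤ} {m : ℕ} {x y : ℤ × ℕ} (h : PAnc lam m x y) :
    x.1 ≤ y.1 ∧ x.2 ≤ y.2 := by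
  induction h with
  | refl => exact ⟨le_rfl, le_rfl⟩
  | tail hab hbc ih =>
    obtain ⟨h1, h2, _⟩ := pparent_facts hbc
    have := ih.2
    exact ⟨ih.1.trans h1, by rcases h2 with h | h <;> omega⟩

lemma panc_antisymm {lam : ℕ → Set ℤ} {m : ℕ} {x y : ℤ × ℕ}
    (h1 : PAnc lam m x y) (h2 : PAnc lam m y x) : x = y := by
  have a := panc_le h1
  have b := panc_le h2
  exact Prod.ext (le_antisymm a.1 b.1) (le_antisymm a.2 b.2)

lemma pparent_unique {lam : ℕ → Set ℤ} {m : ℕ} {x y z : ℤ × ℕ}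
    (hy : PParent lam m x y) (hz : PParent lam m x z) : y = z := by
  obtain ⟨_, hm, hy⟩ := hy
  obtain ⟨_, _, hz⟩ := hz
  rcases hy with ⟨y1, y2, y3, y4⟩ | ⟨y1, y2, y3, y4, y5⟩ <;>
    rcases hz with ⟨z1, z2, z3, z4⟩ | ⟨z1, z2, z3, z4, z5⟩
  · exact Prod.ext (iE_inj (y3.trans z3.symm)) (y1.trans z1.symm)
  · exfalso
    rcases y4 with h | h
    · omega
    · have h1 : iE y.1 ≤ iE z.1 := z4 ▸ h
      have h2 : iE z.1 < iE y.1 := y3 ▸ z5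
      exact absurd (h1.trans_lt h2) (lt_irrefl _)
  · exfalso
    rcases z4 with h | h
    · omega
    · have h1 : iE z.1 ≤ iE y.1 := y4 ▸ h
      have h2 : iE y.1 < iE z.1 := z3 ▸ y5
      exact absurd (h1.trans_lt h2) (lt_irrefl _)
  · exact Prod.ext (iE_inj (y4.trans z4.symm)) (y1.trans z1.symm)

/-- The first ancestor at level `L` is a weighted level ancestor. -/
lemma exists_la {lam : ℕ → Set ℤ} {m : ℕ} {x c : ℤ × ℕ} (h : PAnc lam m x c)
    (L : ℕ) (hc : L ≤ c.2) :
    x.2 ≤ L → ∃ a : ℤ × ℕ, PAnc lam m x a ∧ a.2 = L ∧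
      ∀ b, PAnc lam m x b → L ≤ b.2 → PAnc lam m a b := by
  induction h using Relation.ReflTransGen.head_induction_on with
  | refl =>
    intro hx
    exact ⟨c, Relation.ReflTransGen.refl, le_antisymm hx hc, fun b hb _ => hb⟩
  | @head x' y h' hyc ih =>
    intro hx
    by_cases hxL : x'.2 = L
    · exact ⟨x', Relation.ReflTransGen.refl, hxL, fun b hb _ => hb⟩
    · have hy : y.2 ≤ L := by
        obtain ⟨_, h2, _⟩ := pparent_facts h'
        rcases h2 with h | h <;> omega
      obtain ⟨a, ha1, ha2, ha3⟩ := ih hy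
      refine ⟨a, Relation.ReflTransGen.head h' ha1, ha2, fun b hb hLb => ?_⟩
      rcases Relation.ReflTransGen.cases_head hb with rfl | ⟨y', hy', hy'b⟩
      · omega
      · have : y = y' := pparent_unique h' hy'
        exact ha3 b (this ▸ hy'b) hLb

/-- Climbing lemma: from a node `(q,k)` with `q ≤ c ∈ λ(e_{k+1})`,
the ancestor chain reaches level `k+1` at label `≤ c`. -/
lemma climb (lam : ℕ → Set ℤ) (m : ℕ) (k : ℕ) (hk : k + 1 < m) (c : ℤ) (hc : c ∈ lam (k + 1)) :
    ∀ N : ℕ, ∀ q : ℤ, (c - q).toNat ≤ N → q ∈ lam k → q ≤ c →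
      ∃ q', q' ∈ lam (k + 1) ∧ q' ≤ c ∧ PAnc lam m (q, k) (q', k + 1) := by
  intro N
  induction N with
  | zero =>
    intro q hN hq hqc
    have hsle : eSucc (iE q) (lam (k + 1)) ≤ iE c := eSucc_le hc (iE_le_iE.mpr hqc)
    have hsne : eSucc (iE q) (lam (k + 1)) ≠ ⊤ := (hsle.trans_lt (iE_lt_top c)).ne
    obtain ⟨q', hq'X, hqq', hq's⟩ := eSucc_attained hsne
    have hq'c : q' ≤ c := iE_le_iE.mp (hq's ▸ hsle)
    by_cases hp : eSucc (iE (q + 1)) (lam k) ≤ iE q'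
    · exfalso
      have hpne : eSucc (iE (q + 1)) (lam k) ≠ ⊤ := (hp.trans_lt (iE_lt_top q')).ne
      obtain ⟨q₂, hq₂X, hq₂ge, hq₂val⟩ := eSucc_attained hpne
      have hq₂q' : q₂ ≤ q' := iE_le_iE.mp (hq₂val ▸ hp)
      omega
    · have hlt : iE q' < eSucc (iE (q + 1)) (lam k) := not_le.mp hp
      exact ⟨q', hq'X, hq'c, Relation.ReflTransGen.single
        ⟨hq, by omega, Or.inr ⟨rfl, hk, hq'X, hq's, hlt⟩⟩⟩
  | succ N ih =>
    intro q hN hq hqc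
    have hsle : eSucc (iE q) (lam (k + 1)) ≤ iE c := eSucc_le hc (iE_le_iE.mpr hqc)
    have hsne : eSucc (iE q) (lam (k + 1)) ≠ ⊤ := (hsle.trans_lt (iE_lt_top c)).ne
    obtain ⟨q', hq'X, hqq', hq's⟩ := eSucc_attained hsne
    have hq'c : q' ≤ c := iE_le_iE.mp (hq's ▸ hsle)
    by_cases hp : eSucc (iE (q + 1)) (lam k) ≤ iE q'
    · have hpne : eSucc (iE (q + 1)) (lam k) ≠ ⊤ := (hp.trans_lt (iE_lt_top q')).ne
      obtain ⟨q₂, hq₂X, hq₂ge, hq₂val⟩ := eSucc_attained hpne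
      have hq₂q' : q₂ ≤ q' := iE_le_iE.mp (hq₂val ▸ hp)
      have hpar : PParent lam m (q, k) (q₂, k) :=
        ⟨hq, by omega, Or.inl ⟨rfl, hq₂X, hq₂val, Or.inr (by rw [hq₂val]; exact hp.trans hq's.le)⟩⟩
      obtain ⟨q'', h1, h2, h3⟩ := ih q₂ (by omega) hq₂X (by omega)
      exact ⟨q'', h1, h2, Relation.ReflTransGen.head hpar h3⟩
    · have hlt : iE q' < eSucc (iE (q + 1)) (lam k) := not_le.mp hp
      exact ⟨q', hq'X, hq'c, Relation.ReflTransGen.single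
        ⟨hq, by omega, Or.inr ⟨rfl, hk, hq'X, hq's, hlt⟩⟩⟩

/-- Forward lemma: every ancestor of `(ℓ,i)` yields a journey. -/
lemma journey_of_anc {lam : ℕ → Set ℤ} {m : ℕ} {t : EReal} {ℓ : ℤ} {i : ℕ}
    (hl : ℓ ∈ lam i) (ht : t ≤ iE ℓ) {y : ℤ × ℕ} (h : PAnc lam m (ℓ, i) y) :
    i ≤ y.2 ∧ ∃ f : ℕ → ℤ, (∀ k, i ≤ k → k ≤ y.2 → f k ∈ lam k) ∧
      (∀ k, i ≤ k → k < y.2 → f k ≤ f (k + 1)) ∧ t ≤ iE (f i) ∧ f y.2 = y.1 := by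
  induction h with
  | refl =>
    refine ⟨le_rfl, fun _ => ℓ, fun k h1 h2 => ?_, fun k h1 h2 => by omega, ht, rfl⟩
    have : k = i := le_antisymm h2 h1
    rw [this]; exact hl
  | @tail b y hab hbc ih =>
    obtain ⟨hiy, f, hmem, hmono, hdep, hval⟩ := ih
    obtain ⟨hb1, hb2, hcase⟩ := hbc
    rcases hcase with ⟨h1, h2, h3, _⟩ | ⟨h1, h2, h3, h4, _⟩
    · -- red step, level stays
      have hstep : iE (b.1 + 1) ≤ iE y.1 := h3.symm ▸ le_eSucc _ _
      have hby : b.1 + 1 ≤ y.1 := iE_le_iE.mp hstep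
      refine ⟨h1 ▸ hiy, fun k => if k = b.2 then y.1 else f k, ?_, ?_, ?_, ?_⟩
      · intro k hk1 hk2
        by_cases hkb : k = b.2
        · simp only [hkb, if_pos rfl]; exact h2
        · simp only [if_neg hkb]
          exact hmem k hk1 (by omega)
      · intro k hk1 hk2
        rw [h1] at hk2
        have hkb : k ≠ b.2 := by omega
        by_cases hk1b : k + 1 = b.2
        · simp only [if_neg hkb, if_pos hk1b]
          have := hmono k hk1 (by omega)
          have : f k ≤ f b.2 := hk1b ▸ this
          have : f k ≤ b.1 := hval ▸ this
          omega
        · simp only [if_neg hkb, if_neg hk1b]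
          exact hmono k hk1 (by omega)
      · by_cases hib : i = b.2
        · simp only [if_pos hib]
          have : t ≤ iE b.1 := by
            have := hdep
            rw [hib, hval] at this
            exact this
          exact this.trans (iE_le_iE.mpr (by omega))
        · simp only [if_neg hib]; exact hdep
      · rw [h1]; simp
    · -- blue step, level increases by one
      have hstep : iE b.1 ≤ iE y.1 := h4.symm ▸ le_eSucc _ _
      have hby : b.1 ≤ y.1 := iE_le_iE.mp hstep
      refine ⟨by omega, fun k => if k = b.2 + 1 then y.1 else f k, ?_, ?_, ?_, ?_⟩
      · intro k hk1 hk2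
        rw [h1] at hk2
        by_cases hkb : k = b.2 + 1
        · simp only [hkb, if_pos rfl]; exact h3
        · simp only [if_neg hkb]
          exact hmem k hk1 (by omega)
      · intro k hk1 hk2
        rw [h1] at hk2
        have hkb : k ≠ b.2 + 1 := by omega
        by_cases hk1b : k + 1 = b.2 + 1
        · simp only [if_neg hkb, if_pos hk1b]
          have hkb2 : k = b.2 := by omega
          calc f k = b.1 := by rw [hkb2, hval]
            _ ≤ y.1 := hby
        · simp only [if_neg hkb, if_neg hk1b]
          exact hmono k hk1 (by omega)
      · have hib : i ≠ b.2 + 1 := by omega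
        simp only [if_neg hib]; exact hdep
      · rw [h1]; simp

/-- Backward lemma: every journey dominates an ancestor of `(ℓ,i)` at each level. -/
lemma anc_of_journey {lam : ℕ → Set ℤ} {m : ℕ} {t : EReal} {ℓ : ℤ} {i j : ℕ}
    (hij : i < j) (hjm : j ≤ m) (hlmem : ℓ ∈ lam i)
    (hlmin : ∀ c ∈ lam i, t ≤ iE c → ℓ ≤ c)
    {f : ℕ → ℤ} (hfmem : ∀ k, i ≤ k → k < j → f k ∈ lam k)
    (hfmono : ∀ k, i ≤ k → k + 1 < j → f k ≤ f (k + 1)) (hdep : t ≤ iE (f i)) :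
    ∀ k, i ≤ k → k < j → ∃ q, q ∈ lam k ∧ q ≤ f k ∧ PAnc lam m (ℓ, i) (q, k) := by
  intro k hk
  induction k, hk using Nat.le_induction with
  | base =>
    intro _
    exact ⟨ℓ, hlmem, hlmin _ (hfmem i le_rfl hij) hdep, Relation.ReflTransGen.refl⟩
  | succ k hk ih =>
    intro hk1j
    obtain ⟨q, hqmem, hqle, hanc⟩ := ih (by omega)
    have h1 : q ≤ f (k + 1) := le_trans hqle (hfmono k hk hk1j)
    have hc : f (k + 1) ∈ lam (k + 1) := hfmem _ (by omega) hk1j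
    have hkm : k + 1 < m := by omega
    obtain ⟨q', h1', h2', h3'⟩ :=
      climb lam m k hkm (f (k + 1)) hc (f (k + 1) - q).toNat q le_rfl hqmem h1
    exact ⟨q', h1', h2', hanc.trans h3'⟩

/-- Correctness of the earliest-arrival query on a temporal path with vertices
`v₀, …, v_{n−1}`: for `i < j` and `ℓ = succ(t, λ(e_i))`, `EA(v_i, v_j, t) = +∞` if
`ℓ = +∞` or the `(j−i−1)`-th weighted level ancestor of `(ℓ, i)` does not exist;
otherwise that ancestor is of the form `(ℓ*, j−1)` and `EA(v_i, v_j, t) = ℓ*`. -/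
theorem pEA_level_ancestor_correct (n : ℕ) (lam : ℕ → Set ℤ) (i j : ℕ)
    (hij : i < j) (hj : j ≤ n - 1) (t : EReal) :
    (eSucc t (lam i) = ⊤ → pEA lam i j t = ⊤) ∧
      (∀ ℓ : ℤ, ℓ ∈ lam i → iE ℓ = eSucc t (lam i) →
        ((¬ ∃ a, PIsLA lam (n - 1) (ℓ, i) (j - i - 1) a) → pEA lam i j t = ⊤) ∧
          (∀ a : ℤ × ℕ, PIsLA lam (n - 1) (ℓ, i) (j - i - 1) a →
            a.2 = j - 1 ∧ pEA lam i j t = iE a.1)) := by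
  set m := n - 1 with hm
  constructor
  · intro htop
    have hempty : {a : EReal | ∃ dep arr : ℤ, PJourney lam i j dep arr ∧
        t ≤ iE dep ∧ a = iE arr} = ∅ := by
      ext a
      simp only [Set.mem_empty_iff_false, iff_false, Set.mem_setOf_eq]
      rintro ⟨dep, arr, ⟨f, hmem, hmono, hdep, harr⟩, ht, rfl⟩
      have hd : dep ∈ lam i := hdep ▸ hmem i le_rfl hij
      have hle := eSucc_le hd ht
      rw [htop] at hle
      exact absurd (hle.trans_lt (iE_lt_top dep)) (lt_irrefl _)
    rw [pEA, hempty, sInf_empty]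
  · intro ℓ hlmem hlval
    have htl : t ≤ iE ℓ := by rw [hlval]; exact le_eSucc _ _
    have hlmin : ∀ c ∈ lam i, t ≤ iE c → ℓ ≤ c := fun c hc htc =>
      iE_le_iE.mp (by rw [hlval]; exact eSucc_le hc htc)
    constructor
    · intro hno
      by_contra hne
      have hS : {a : EReal | ∃ dep arr : ℤ, PJourney lam i j dep arr ∧
          t ≤ iE dep ∧ a = iE arr}.Nonempty := by
        by_contra h
        rw [Set.not_nonempty_iff_eq_empty] at h
        exact hne (by rw [pEA, h, sInf_empty])
      obtain ⟨a0, dep, arr, ⟨f, hmem, hmono, hdep, harr⟩, htdep, rfl⟩ := hS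
      have hdep' : t ≤ iE (f i) := hdep ▸ htdep
      obtain ⟨q, hq1, hq2, hanc⟩ := anc_of_journey hij hj hlmem hlmin hmem hmono hdep'
        (j - 1) (by omega) (by omega)
      obtain ⟨a, ha1, ha2, ha3⟩ := exists_la hanc (j - 1) (by simp) (by simp; omega)
      exact hno ⟨a, ha1, by simp only []; omega, fun b hb hLb => ha3 b hb (by omega)⟩
    · intro a hLA
      obtain ⟨hanc, hge, hprop⟩ := hLA
      have hge' : j - 1 ≤ a.2 := by
        have := hge
        simp only [] at this
        omega
      obtain ⟨a0, ha01, ha02, ha03⟩ := exists_la hanc (j - 1) hge' (by simp; omega)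
      have haa0 : PAnc lam m a a0 := hprop a0 ha01 (by simp only []; omega)
      have ha0a : PAnc lam m a0 a := ha03 a hanc (by omega)
      have heq : a = a0 := panc_antisymm haa0 ha0a
      have ha2 : a.2 = j - 1 := by rw [heq, ha02]
      refine ⟨ha2, le_antisymm ?_ ?_⟩
      · -- pEA ≤ iE a.1
        obtain ⟨hiy, f, hmem, hmono, hdep, hval⟩ := journey_of_anc hlmem htl hanc
        have hj1 : PJourney lam i j (f i) (f (j - 1)) := by
          refine ⟨f, fun k h1 h2 => hmem k h1 (by omega), fun k h1 h2 => hmono k h1 (by omega),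
            rfl, rfl⟩
        have hfa : f (j - 1) = a.1 := by rw [← ha2, hval]
        calc pEA lam i j t ≤ iE (f (j - 1)) :=
              sInf_le ⟨f i, f (j - 1), hj1, hdep, rfl⟩
          _ = iE a.1 := by rw [hfa]
      · -- iE a.1 ≤ pEA
        refine le_sInf fun e he => ?_
        obtain ⟨dep, arr, ⟨f, hmem, hmono, hdep, harr⟩, htdep, rfl⟩ := he
        have hdep' : t ≤ iE (f i) := hdep ▸ htdep
        obtain ⟨q, hq1, hq2, hancq⟩ := anc_of_journey hij hj hlmem hlmin hmem hmono hdep'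
          (j - 1) (by omega) (by omega)
        have haq : PAnc lam m a (q, j - 1) := hprop (q, j - 1) hancq (by simp only []; omega)
        have hle : a.1 ≤ q := (panc_le haq).1
        rw [harr]
        exact iE_le_iE.mpr (by omega)
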